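/- For all t > 0 and reals x > y > x' > y', |E[(u(t,x) - u(t,y))(u(t,x') - u(t,y'))]| ≤ (1/(4√(tπ))) (x-y)(x'-y') e^{-(y-x')²/(4t)}. -/

import Mathlib

open MeasureTheory Real

/-- `f(w) = w ∫_w^∞ s^{-2} e^{-s²/(4t)} ds` for a fixed `t > 0`. -/
noncomputable def fAux (t w : ℝ) : ℝ :=
  w * ∫ s in Set.Ioi w, (s ^ 2)⁻¹ * Real.exp (-s ^ 2 / (4 * t))

section Aux

variable {t : ℝ}

private noncomputable def gA (t s : ℝ) : ℝ := Real.exp (-s ^ 2 / (4 * t))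

private noncomputable def EA (t w : ℝ) : ℝ := ∫ s in Set.Ioi w, gA t s

private lemma gA_integrable (ht : 0 < t) : Integrable (gA t) := by
  have h : ∀ s : ℝ, gA t s = Real.exp (-((4 * t)⁻¹) * s ^ 2) := by
    intro s
    unfold gA
    congr 1
    field_simp
  have h2 : gA t = fun s => Real.exp (-((4 * t)⁻¹) * s ^ 2) := funext h
  rw [h2]
  exact integrable_exp_neg_mul_sq (by positivity)

private lemma gA_continuous : Continuous (gA t) := by
  unfold gA
  fun_prop

private lemma gA_pos (s : ℝ) : 0 < gA t s := Real.exp_pos _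

private lemma gA_le_one (ht : 0 < t) (s : ℝ) : gA t s ≤ 1 := by
  unfold gA
  rw [show (1 : ℝ) = Real.exp 0 by simp]
  apply Real.exp_le_exp.2
  have : 0 ≤ s ^ 2 := sq_nonneg s
  have : 0 < 4 * t := by linarith
  rw [div_nonpos_iff]
  right
  constructor <;> nlinarith [sq_nonneg s]

private lemma gA_hasDerivAt (ht : 0 < t) (s : ℝ) :
    HasDerivAt (gA t) (-(s / (2 * t)) * gA t s) s := by
  have h1 : HasDerivAt (fun s : ℝ => -s ^ 2 / (4 * t)) (-(2 * s) / (4 * t)) s := by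
    have := ((hasDerivAt_pow 2 s).neg).div_const (4 * t)
    simpa using this
  have := h1.exp
  refine this.congr_deriv ?_
  unfold gA
  field_simp
  ring

private lemma EA_eq (ht : 0 < t) (w : ℝ) :
    EA t w = EA t 0 - ∫ s in (0:ℝ)..w, gA t s := by
  have hint := gA_integrable ht
  have key : ∀ v : ℝ, EA t v = (∫ s, gA t s) - ∫ s in Set.Iic v, gA t s := by
    intro v
    have := intervalIntegral.integral_Iic_add_Ioi (f := gA t) (b := v) hint.integrableOn hint.integrableOn
    unfold EA
    linarith [this]
  rw [key w, key 0]
  have := intervalIntegral.integral_Iic_sub_Iic (f := gA t) (μ := volume) (a := (0:ℝ)) (b := w)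
    hint.integrableOn hint.integrableOn
  linarith [this]

private lemma EA_hasDerivAt (ht : 0 < t) (w : ℝ) :
    HasDerivAt (EA t) (-(gA t w)) w := by
  have h : HasDerivAt (fun v => EA t 0 - ∫ s in (0:ℝ)..v, gA t s) (-(gA t w)) w := by
    have hF : HasDerivAt (fun v => ∫ s in (0:ℝ)..v, gA t s) (gA t w) w := by
      exact intervalIntegral.integral_hasDerivAt_right
        ((gA_integrable ht).intervalIntegrable)
        (gA_continuous.stronglyMeasurableAtFilter _ _)
        gA_continuous.continuousAt
    exact ((hasDerivAt_const w (EA t 0)).sub hF).congr_deriv (zero_sub _)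
  apply h.congr_of_eventuallyEq
  filter_upwards with v
  exact EA_eq ht v

private lemma EA_nonneg (ht : 0 < t) (w : ℝ) : 0 ≤ EA t w := by
  apply integral_nonneg
  intro s
  exact (gA_pos s).le

/-- Integration by parts identity for `fAux`. -/
private lemma fAux_eq (ht : 0 < t) {w : ℝ} (hw : 0 < w) :
    fAux t w = gA t w - w / (2 * t) * EA t w := by
  set G : ℝ → ℝ := fun s => -(gA t s) / s with hG
  have hderiv : ∀ s ∈ Set.Ioi w, HasDerivAt G ((s ^ 2)⁻¹ * gA t s + (2 * t)⁻¹ * gA t s) s := by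
    intro s hs
    have hs0 : 0 < s := lt_trans hw hs
    have h1 := ((gA_hasDerivAt ht s).neg).div (hasDerivAt_id s) (ne_of_gt hs0)
    refine h1.congr_deriv ?_
    simp only [Pi.neg_apply, id]
    unfold gA
    field_simp
    ring
  have hintsq : IntegrableOn (fun s : ℝ => (s ^ 2)⁻¹ * gA t s) (Set.Ioi w) := by
    apply Integrable.mono' (g := fun s : ℝ => s ^ ((-2 : ℝ)))
      (integrableOn_Ioi_rpow_of_lt (by norm_num) hw)
    · exact (((measurable_id.pow_const 2).inv.mul gA_continuous.measurable).aestronglyMeasurable).restrict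
    · filter_upwards [ae_restrict_mem measurableSet_Ioi] with s hs
      have hs0 : 0 < s := lt_trans hw hs
      rw [Real.rpow_neg hs0.le, Real.norm_eq_abs,
        abs_of_nonneg (mul_nonneg (by positivity) (gA_pos s).le)]
      have h2 : s ^ ((2:ℝ)) = s ^ 2 := by
        rw [show ((2:ℝ)) = ((2:ℕ) : ℝ) by norm_num, Real.rpow_natCast]
      rw [h2]
      calc (s ^ 2)⁻¹ * gA t s ≤ (s ^ 2)⁻¹ * 1 := by
            apply mul_le_mul_of_nonneg_left (gA_le_one ht s) (by positivity)
        _ = (s ^ 2)⁻¹ := by ring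
  have hintg : IntegrableOn (fun s : ℝ => (2 * t)⁻¹ * gA t s) (Set.Ioi w) :=
    ((gA_integrable ht).const_mul _).integrableOn
  have hint : IntegrableOn (fun s : ℝ => (s ^ 2)⁻¹ * gA t s + (2 * t)⁻¹ * gA t s)
      (Set.Ioi w) := hintsq.add hintg
  have htend : Filter.Tendsto G Filter.atTop (nhds 0) := by
    have h1 : Filter.Tendsto (fun s : ℝ => s⁻¹) Filter.atTop (nhds 0) :=
      tendsto_inv_atTop_zero
    have h2 : Filter.Tendsto (fun s : ℝ => -s⁻¹) Filter.atTop (nhds 0) := by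
      simpa using h1.neg
    apply tendsto_of_tendsto_of_tendsto_of_le_of_le' h2 h1
    · filter_upwards [Filter.eventually_gt_atTop 0] with s hs
      rw [hG]
      simp only
      rw [neg_div, neg_le_neg_iff, div_le_iff₀ hs]
      calc gA t s ≤ 1 := gA_le_one ht s
        _ = s⁻¹ * s := by field_simp
    · filter_upwards [Filter.eventually_gt_atTop 0] with s hs
      rw [hG]
      simp only
      have : 0 < gA t s / s := div_pos (gA_pos s) hs
      rw [neg_div]
      linarith [inv_pos.2 hs]
  have hcont : ContinuousWithinAt G (Set.Ici w) w := by
    apply ContinuousAt.continuousWithinAt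
    apply ContinuousAt.div (by exact (gA_continuous.neg).continuousAt) continuousAt_id
      (ne_of_gt hw)
  have hIBP := integral_Ioi_of_hasDerivAt_of_tendsto hcont hderiv hint htend
  rw [integral_add hintsq hintg] at hIBP
  have hEA : ∫ s in Set.Ioi w, (2 * t)⁻¹ * gA t s = (2 * t)⁻¹ * EA t w := by
    unfold EA
    rw [integral_const_mul]
  rw [hEA] at hIBP
  have hGw : G w = -(gA t w) / w := rfl
  have hkey : ∫ s in Set.Ioi w, (s ^ 2)⁻¹ * gA t s = gA t w / w - (2 * t)⁻¹ * EA t w := by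
    rw [hGw, neg_div, zero_sub, neg_neg] at hIBP
    linarith [hIBP]
  unfold fAux
  have : ∀ s : ℝ, (s ^ 2)⁻¹ * Real.exp (-s ^ 2 / (4 * t)) = (s ^ 2)⁻¹ * gA t s := fun s => rfl
  simp only [this]
  rw [hkey]
  field_simp

private lemma fAux_hasDerivAt (ht : 0 < t) {w : ℝ} (hw : 0 < w) :
    HasDerivAt (fAux t) (-(EA t w) / (2 * t)) w := by
  have h1 : HasDerivAt (fun v => gA t v - v / (2 * t) * EA t v) (-(EA t w) / (2 * t)) w := by
    have hg := gA_hasDerivAt ht w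
    have hE := EA_hasDerivAt ht w
    have hid : HasDerivAt (fun v : ℝ => v / (2 * t)) ((2 * t)⁻¹) w := by
      simpa using (hasDerivAt_id w).div_const (2 * t)
    have := hg.sub (hid.mul hE)
    refine this.congr_deriv ?_
    field_simp
    ring
  apply h1.congr_of_eventuallyEq
  filter_upwards [Ioi_mem_nhds hw] with v hv
  exact fAux_eq ht hv

end Aux

/-- For all `t > 0` and reals `x > y > x' > y'`,
`|E[(u(t,x)-u(t,y))(u(t,x')-u(t,y'))]| ≤ (1/(4√(tπ)))(x-y)(x'-y')e^{-(y-x')²/(4t)}`, where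
the spatial covariance is `R_{a,b}(t,t) = (√t/(2√π)) f(|a-b|)`. -/
theorem stmt_10 (t x y x' y' : ℝ) (ht : 0 < t) (h1 : y' < x') (h2 : x' < y) (h3 : y < x) :
    |(Real.sqrt t / (2 * Real.sqrt π)) *
        (fAux t (x - x') - fAux t (x - y') - fAux t (y - x') + fAux t (y - y'))| ≤
      (4 * Real.sqrt (t * π))⁻¹ * ((x - y) * (x' - y')) * Real.exp (-(y - x') ^ 2 / (4 * t)) := by
  set φ : ℝ → ℝ := fun a => fAux t (a - x') - fAux t (a - y') with hφ
  have hφderiv : ∀ a, x' < a →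
      HasDerivAt φ ((EA t (a - y') - EA t (a - x')) / (2 * t)) a := by
    intro a ha
    have hax : 0 < a - x' := by linarith
    have hay : 0 < a - y' := by linarith
    have d1 : HasDerivAt (fun a => fAux t (a - x')) (-(EA t (a - x')) / (2 * t)) a := by
      have := (fAux_hasDerivAt ht hax).comp a ((hasDerivAt_id a).sub_const x')
      exact this.congr_deriv (mul_one _)
    have d2 : HasDerivAt (fun a => fAux t (a - y')) (-(EA t (a - y')) / (2 * t)) a := by
      have := (fAux_hasDerivAt ht hay).comp a ((hasDerivAt_id a).sub_const y')
      exact this.congr_deriv (mul_one _)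
    have := d1.sub d2
    refine this.congr_deriv ?_
    ring
  -- first mean value theorem
  obtain ⟨c, hc, hc'⟩ := exists_hasDerivAt_eq_slope φ
    (fun a => (EA t (a - y') - EA t (a - x')) / (2 * t)) h3
    (fun a ha => (hφderiv a (by exact lt_of_lt_of_le h2 ha.1)).continuousAt.continuousWithinAt)
    (fun a ha => hφderiv a (by exact lt_trans h2 ha.1))
  -- second mean value theorem, applied to EA
  have hcx : c - x' < c - y' := by linarith
  obtain ⟨ξ, hξ, hξ'⟩ := exists_hasDerivAt_eq_slope (EA t) (fun s => -(gA t s)) hcx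
    (fun s _ => (EA_hasDerivAt ht s).continuousAt.continuousWithinAt)
    (fun s _ => EA_hasDerivAt ht s)
  have hsub : (c - y') - (c - x') = x' - y' := by ring
  have hxy'ne : (x' - y' : ℝ) ≠ 0 := ne_of_gt (by linarith)
  have hEdiff : EA t (c - y') - EA t (c - x') = -(gA t ξ) * (x' - y') := by
    rw [hsub, eq_div_iff hxy'ne] at hξ'
    linarith [hξ']
  have hD : fAux t (x - x') - fAux t (x - y') - fAux t (y - x') + fAux t (y - y')
      = -(gA t ξ) * (x' - y') * (x - y) / (2 * t) := by
    have hφxy : φ x - φ y = (EA t (c - y') - EA t (c - x')) / (2 * t) * (x - y) := by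
      have hxy : (x - y : ℝ) ≠ 0 := ne_of_gt (by linarith)
      rw [hc']
      exact (div_mul_cancel₀ _ hxy).symm
    have : φ x - φ y = fAux t (x - x') - fAux t (x - y') - fAux t (y - x') + fAux t (y - y') := by
      rw [hφ]; ring
    rw [← this, hφxy, hEdiff]
    ring
  rw [hD]
  have hgξ : gA t ξ ≤ Real.exp (-(y - x') ^ 2 / (4 * t)) := by
    unfold gA
    apply Real.exp_le_exp.2
    have hyx : 0 < y - x' := by linarith
    have hξyx : y - x' ≤ ξ := by
      have : c - x' < ξ := hξ.1
      have : y < c := hc.1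
      linarith
    have : (y - x') ^ 2 ≤ ξ ^ 2 := by nlinarith
    have h4t : (0:ℝ) < 4 * t := by linarith
    rw [div_le_div_iff₀ h4t h4t]
    nlinarith
  -- compute the absolute value
  have hpref : 0 < Real.sqrt t / (2 * Real.sqrt π) := by
    apply div_pos (Real.sqrt_pos.2 ht)
    have := Real.pi_pos
    positivity
  have habs : |(Real.sqrt t / (2 * Real.sqrt π)) *
      (-(gA t ξ) * (x' - y') * (x - y) / (2 * t))|
      = (Real.sqrt t / (2 * Real.sqrt π)) * (gA t ξ * (x' - y') * (x - y) / (2 * t)) := by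
    rw [abs_mul, abs_of_pos hpref]
    congr 1
    rw [abs_div, abs_of_pos (by linarith : (0:ℝ) < 2 * t)]
    congr 1
    rw [abs_mul, abs_mul]
    rw [abs_of_pos (by linarith : (0:ℝ) < x - y), abs_of_pos (by linarith : (0:ℝ) < x' - y')]
    rw [abs_neg, abs_of_pos (gA_pos ξ)]
  rw [habs]
  have hconst : Real.sqrt t / (2 * Real.sqrt π) / (2 * t) = (4 * Real.sqrt (t * π))⁻¹ := by
    rw [Real.sqrt_mul ht.le]
    have hst : 0 < Real.sqrt t := Real.sqrt_pos.2 ht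
    have hsp : 0 < Real.sqrt π := Real.sqrt_pos.2 Real.pi_pos
    have htt : Real.sqrt t * Real.sqrt t = t := Real.mul_self_sqrt ht.le
    field_simp
    nlinarith [htt]
  calc Real.sqrt t / (2 * Real.sqrt π) * (gA t ξ * (x' - y') * (x - y) / (2 * t))
      = (4 * Real.sqrt (t * π))⁻¹ * ((x - y) * (x' - y')) * gA t ξ := by
        rw [← hconst]; ring
    _ ≤ (4 * Real.sqrt (t * π))⁻¹ * ((x - y) * (x' - y')) * Real.exp (-(y - x') ^ 2 / (4 * t)) := by
        apply mul_le_mul_of_nonneg_left hgξ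
        have hsp : 0 < Real.sqrt (t * π) := Real.sqrt_pos.2 (mul_pos ht Real.pi_pos)
        have h1 : (0:ℝ) < x - y := by linarith
        have h2 : (0:ℝ) < x' - y' := by linarith
        positivity
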